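/- The steady-state productivity function φ(s) = (α/k) μ(s)(s_in − s), with μ Haldane, attains its maximum on [0, s_in] at s^◇ = s_in / (1 + √(1 + (s_in/k_S)(1 + s_in/k_I))), and s^◇ < s̄ = √(k_S k_I). -/

import Mathlib

lemma productivity_aux_crit (kS kI sin D a : ℝ) (hkI : 0 < kI)
    (h1D : (0:ℝ) < 1 + D)
    (hD2' : kS * kI * D ^ 2 = kS * kI + sin * kI + sin ^ 2)
    (hadef : a = sin / (1 + D)) :
    kS * sin * kI - 2 * kS * a * kI - a ^ 2 * (kI + sin) = 0 := by
  rw [hadef]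
  field_simp
  linear_combination sin * hD2'

lemma productivity_aux_lt (kS kI sin a : ℝ) (hkS : 0 < kS) (hkI : 0 < kI)
    (hsin : 0 < sin) (ha0 : 0 < a)
    (hg : kS * sin * kI - 2 * kS * a * kI - a ^ 2 * (kI + sin) = 0) :
    a < Real.sqrt (kS * kI) := by
  by_contra hcon
  push_neg at hcon
  have hb0 : 0 ≤ Real.sqrt (kS * kI) := Real.sqrt_nonneg _
  have hb2 : Real.sqrt (kS * kI) ^ 2 = kS * kI := Real.sq_sqrt (by positivity)
  have h1 : Real.sqrt (kS * kI) ^ 2 * (kI + sin) ≤ a ^ 2 * (kI + sin) :=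
    mul_le_mul_of_nonneg_right (pow_le_pow_left₀ hb0 hcon 2) (by positivity)
  have e : Real.sqrt (kS * kI) ^ 2 * (kI + sin) = kS * kI * kI + kS * kI * sin := by
    rw [hb2]; ring
  have hp1 : 0 < kS * a * kI := by positivity
  have hp2 : 0 < kS * kI * kI := by positivity
  linarith

lemma productivity_aux_key (kS kI sin a s : ℝ) (hkS : 0 < kS) (hkI : 0 < kI)
    (ha0 : 0 < a) (halt : a < sin) (hs0 : 0 ≤ s) (hs1 : s ≤ sin)
    (hg : kS * sin * kI - 2 * kS * a * kI - a ^ 2 * (kI + sin) = 0) :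
    s * (sin - s) * (kS * kI + a * kI + a ^ 2)
      ≤ a * (sin - a) * (kS * kI + s * kI + s ^ 2) := by
  have hc : 0 ≤ a * (sin - a) + (kS * kI + a * kI + a ^ 2) := by nlinarith
  have hX : (kS * sin * kI - 2 * kS * a * kI - a ^ 2 * (kI + sin)) * (s - a) = 0 := by
    rw [hg]; ring
  nlinarith [hX, mul_nonneg hc (sq_nonneg (s - a))]

lemma productivity_aux_expand (μbar kS kI α k sin t : ℝ)
    (hkS : 0 < kS) (hkI : 0 < kI) (hk : 0 < k) (ht : 0 ≤ t) :
    α / k * (μbar * t / (kS + t + t ^ 2 / kI)) * (sin - t)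
      = α * μbar * (t * (sin - t) * kI) / (k * (kS * kI + t * kI + t ^ 2)) := by
  have hQt : (0:ℝ) < kS + t + t ^ 2 / kI := by positivity
  have hQt' : (0:ℝ) < kS * kI + t * kI + t ^ 2 := by positivity
  field_simp

lemma productivity_aux_main (μbar kS kI α k sin D a : ℝ) (hμbar : 0 < μbar)
    (hkS : 0 < kS) (hkI : 0 < kI) (hα : 0 < α) (hk : 0 < k)
    (hsin : 0 < sin) (hD1 : 1 < D)
    (hD2' : kS * kI * D ^ 2 = kS * kI + sin * kI + sin ^ 2)
    (hadef : a = sin / (1 + D)) (s : ℝ) (hs0 : 0 ≤ s) (hs1 : s ≤ sin) :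
    α / k * (μbar * s / (kS + s + s ^ 2 / kI)) * (sin - s)
      ≤ α / k * (μbar * a / (kS + a + a ^ 2 / kI)) * (sin - a) := by
  have h1D : (0:ℝ) < 1 + D := by linarith
  have ha0 : 0 < a := hadef ▸ div_pos hsin h1D
  have halt : a < sin := by
    rw [hadef, div_lt_iff₀ h1D]; nlinarith
  have hg := productivity_aux_crit kS kI sin D a hkI h1D hD2' hadef
  have key := productivity_aux_key kS kI sin a s hkS hkI ha0 halt hs0 hs1 hg
  rw [productivity_aux_expand μbar kS kI α k sin s hkS hkI hk hs0,
    productivity_aux_expand μbar kS kI α k sin a hkS hkI hk ha0.le]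
  rw [div_le_div_iff₀ (by positivity) (by positivity)]
  have hC : (0:ℝ) ≤ α * μbar * kI * k := by positivity
  have hfin := mul_le_mul_of_nonneg_left key hC
  nlinarith [hfin]

/-- The steady-state productivity φ(s) = (α/k) μ(s)(s_in − s) attains its maximum on
[0, s_in] at s^◇ = s_in/(1 + √(1 + (s_in/k_S)(1 + s_in/k_I))), and s^◇ < s̄. -/
theorem productivity_max (μbar kS kI α k sin : ℝ) (hμbar : 0 < μbar)
    (hkS : 0 < kS) (hkI : 0 < kI) (hα : 0 < α) (hk : 0 < k)
    (hsbar : Real.sqrt (kS * kI) < sin)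
    (μ : ℝ → ℝ)
    (hμ : ∀ s : ℝ, μ s = μbar * s / (kS + s + s ^ 2 / kI)) :
    (∀ s ∈ Set.Icc (0 : ℝ) sin,
      α / k * μ s * (sin - s)
        ≤ α / k * μ (sin / (1 + Real.sqrt (1 + sin / kS * (1 + sin / kI))))
            * (sin - sin / (1 + Real.sqrt (1 + sin / kS * (1 + sin / kI))))) ∧
    sin / (1 + Real.sqrt (1 + sin / kS * (1 + sin / kI))) < Real.sqrt (kS * kI) := by
  have hsin : 0 < sin := lt_of_le_of_lt (Real.sqrt_nonneg _) hsbar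
  obtain ⟨D, hDdef⟩ : ∃ D, D = Real.sqrt (1 + sin / kS * (1 + sin / kI)) := ⟨_, rfl⟩
  rw [← hDdef]
  have hE1 : (1:ℝ) < 1 + sin / kS * (1 + sin / kI) := by
    have h1 : 0 < sin / kS * (1 + sin / kI) := by positivity
    linarith
  have hD2 : D ^ 2 = 1 + sin / kS * (1 + sin / kI) := by
    rw [hDdef]; exact Real.sq_sqrt (by linarith)
  have hD0 : 0 ≤ D := hDdef ▸ Real.sqrt_nonneg _
  have hD1 : 1 < D := by nlinarith
  have h1D : (0:ℝ) < 1 + D := by linarith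
  have hD2' : kS * kI * D ^ 2 = kS * kI + sin * kI + sin ^ 2 := by
    rw [hD2]; field_simp; ring
  have hg := productivity_aux_crit kS kI sin D (sin / (1 + D)) hkI h1D hD2' rfl
  constructor
  · intro s hs
    rw [hμ s, hμ (sin / (1 + D))]
    exact productivity_aux_main μbar kS kI α k sin D (sin / (1 + D)) hμbar hkS hkI hα hk
      hsin hD1 hD2' rfl s hs.1 hs.2
  · exact productivity_aux_lt kS kI sin (sin / (1 + D)) hkS hkI hsin
      (div_pos hsin h1D) hg
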